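/- Let B ⊆ E be open and suppose that for every nonzero integer vector k : Fin d → ℤ, the set {ξ ∈ B | F'(ξ) (fun i => (k i : ℝ)) = 0} has empty interior (Condition Rüssmann over the integer lattice). Let A : E × E → ℝ satisfy ContDiff ℝ 1 A, be ℤ^d-periodic in the first variable (i.e. A (x + (fun i => (m i : ℝ)), ξ) = A (x, ξ) for all m : Fin d → ℤ and all x ξ : E), and Poisson-commute with the Hamiltonian H(x,ξ) = F(ξ), i.e. for all x : E and all ξ ∈ B, fderiv ℝ (fun y => A (y, ξ)) x (gradient F ξ) = 0. Then A is constant along the fibers: A (x, ξ) = A (y, ξ) for all x y : E and all ξ ∈ B. -/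

import Mathlib

open Submodule Module Set Filter Topology


lemma lattice_dual_vec {V : Type} [NormedAddCommGroup V] [InnerProductSpace ℝ V]
    [FiniteDimensional ℝ V] [Nontrivial V]
    (L : Submodule ℤ V) [DiscreteTopology L] (hspan : span ℝ (L : Set V) = ⊤) :
    ∃ y : V, y ≠ 0 ∧ ∀ v ∈ L, ∃ n : ℤ, (inner ℝ y v : ℝ) = n := by
  haveI : IsZLattice ℝ L := ⟨hspan⟩
  haveI : Module.Finite ℤ L := ZLattice.module_finite ℝ L
  haveI : Module.Free ℤ L := ZLattice.module_free ℝ L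
  let b := Module.Free.chooseBasis ℤ L
  let bV := b.ofZLatticeBasis ℝ L
  have hne : Nonempty (Module.Free.ChooseBasisIndex ℤ L) := bV.index_nonempty
  obtain ⟨i₀⟩ := hne
  let f : V →ₗ[ℝ] ℝ := bV.coord i₀
  set y : V := (InnerProductSpace.toDual ℝ V).symm (LinearMap.toContinuousLinearMap f) with hy
  have hyv : ∀ v : V, (inner ℝ y v : ℝ) = f v := by
    intro v
    rw [hy]
    exact InnerProductSpace.toDual_symm_apply
  refine ⟨y, ?_, fun v hv => ⟨b.repr ⟨v, hv⟩ i₀, ?_⟩⟩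
  · intro h
    have h1 : (inner ℝ y (bV i₀) : ℝ) = 1 := by
      rw [hyv]; simp [f]
    rw [h, inner_zero_left] at h1
    norm_num at h1
  · rw [hyv]
    have : f v = bV.repr v i₀ := rfl
    rw [this]
    exact Basis.ofZLatticeBasis_repr_apply ℝ L b ⟨v, hv⟩ i₀


lemma subgroup_discrete_part {V : Type} [NormedAddCommGroup V] [InnerProductSpace ℝ V]
    [FiniteDimensional ℝ V] (D : AddSubgroup V) (hcl : IsClosed (D : Set V))
    (W : Submodule ℝ V) (hW : ∀ v : V, (∀ t : ℝ, t • v ∈ D) → v ∈ W) :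
    ∃ ε > (0:ℝ), ∀ v : V, v ∈ D → v ∈ Wᗮ → ‖v‖ < ε → v = 0 := by
  by_contra hc
  push_neg at hc
  choose v hvD hvK hvlt hvne using fun n : ℕ => hc (1/(n+1)) (by positivity)
  have hvnorm : ∀ n, ‖v n‖ ≠ 0 := fun n => norm_ne_zero_iff.mpr (hvne n)
  obtain ⟨u, hu_def⟩ : ∃ u : ℕ → V, u = fun n => ‖v n‖⁻¹ • v n := ⟨_, rfl⟩
  have hu : ∀ n, u n ∈ Metric.sphere (0:V) 1 := by
    intro n
    rw [hu_def]
    simp [norm_smul, inv_mul_cancel₀ (hvnorm n)]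
  obtain ⟨uL, huLs, φ, hφ, hconv⟩ := (isCompact_sphere (0:V) 1).tendsto_subseq hu
  have hvnn : Tendsto (fun n => ‖v n‖) atTop (𝓝 0) := by
    refine squeeze_zero (fun n => norm_nonneg _) (fun n => (hvlt n).le) ?_
    exact tendsto_one_div_add_atTop_nhds_zero_nat
  have hr : Tendsto (fun n => ‖v (φ n)‖) atTop (𝓝 0) := hvnn.comp hφ.tendsto_atTop
  have hud : Tendsto (fun n => ‖u (φ n) - uL‖) atTop (𝓝 0) := by
    have := tendsto_iff_norm_sub_tendsto_zero.mp hconv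
    simpa [Function.comp] using this
  have hlin : ∀ t : ℝ, t • uL ∈ D := by
    intro t
    set f : ℕ → V := fun n => ⌊t / ‖v (φ n)‖⌋ • v (φ n) with hf_def
    have hfD : ∀ n, f n ∈ D := fun n => D.zsmul_mem (hvD _) _
    have hbound : ∀ n, ‖f n - t • uL‖ ≤ ‖v (φ n)‖ + |t| * ‖u (φ n) - uL‖ := by
      intro n
      set r := ‖v (φ n)‖ with hr_def
      have hrne : r ≠ 0 := hvnorm _
      have hrpos : 0 < r := (norm_nonneg _).lt_of_ne' hrne
      have hv_eq : v (φ n) = r • u (φ n) := by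
        rw [hu_def]
        simp [smul_smul, hr_def, mul_inv_cancel₀ (hvnorm (φ n))]
      have hfn : f n = (((⌊t / r⌋ : ℝ)) * r) • u (φ n) := by
        calc f n = ((⌊t / r⌋ : ℝ)) • v (φ n) := (Int.cast_smul_eq_zsmul ℝ _ _).symm
          _ = ((⌊t / r⌋ : ℝ)) • (r • u (φ n)) := by rw [← hv_eq]
          _ = (((⌊t / r⌋ : ℝ)) * r) • u (φ n) := by rw [smul_smul]
      have hsplit : f n - t • uL =
          (((⌊t / r⌋ : ℝ)) * r - t) • u (φ n) + t • (u (φ n) - uL) := by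
        rw [hfn, sub_smul, smul_sub]
        abel
      have hnu : ‖u (φ n)‖ = 1 := by
        have := hu (φ n)
        simpa using this
      have h1 : |((⌊t / r⌋ : ℝ)) * r - t| ≤ r := by
        have hfr0 : 0 ≤ Int.fract (t / r) := Int.fract_nonneg _
        have hfr1 : Int.fract (t / r) < 1 := Int.fract_lt_one _
        have heq : ((⌊t / r⌋ : ℝ)) * r - t = -(Int.fract (t / r) * r) := by
          rw [Int.fract]
          field_simp
          ring
        rw [heq, abs_neg, abs_of_nonneg (by positivity)]
        nlinarith
      calc ‖f n - t • uL‖ ≤ ‖(((⌊t / r⌋ : ℝ)) * r - t) • u (φ n)‖ + ‖t • (u (φ n) - uL)‖ := by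
            rw [hsplit]; exact norm_add_le _ _
        _ = |((⌊t / r⌋ : ℝ)) * r - t| * ‖u (φ n)‖ + |t| * ‖u (φ n) - uL‖ := by
            rw [norm_smul, norm_smul, Real.norm_eq_abs, Real.norm_eq_abs]
        _ = |((⌊t / r⌋ : ℝ)) * r - t| * 1 + |t| * ‖u (φ n) - uL‖ := by rw [hnu]
        _ ≤ r + |t| * ‖u (φ n) - uL‖ := by rw [mul_one]; gcongr
    have hgz : Tendsto (fun n => ‖v (φ n)‖ + |t| * ‖u (φ n) - uL‖) atTop (𝓝 0) := by
      have := hr.add ((hud.const_mul |t|))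
      simpa using this
    have hft : Tendsto f atTop (𝓝 (t • uL)) := by
      rw [tendsto_iff_norm_sub_tendsto_zero]
      exact squeeze_zero (fun n => norm_nonneg _) hbound hgz
    exact hcl.mem_of_tendsto hft (Filter.Eventually.of_forall hfD)
  have huLW : uL ∈ W := hW uL hlin
  have huLK : uL ∈ Wᗮ := by
    have hKcl : IsClosed ((Wᗮ : Submodule ℝ V) : Set V) := Wᗮ.closed_of_finiteDimensional
    refine hKcl.mem_of_tendsto hconv (Filter.Eventually.of_forall fun n => ?_)
    show u (φ n) ∈ Wᗮ
    rw [hu_def]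
    exact Wᗮ.smul_mem _ (hvK _)
  have : uL = 0 := by
    have := (Submodule.mem_orthogonal Wᗮ uL).mp ?_ uL huLK
    · exact inner_self_eq_zero.mp this
    · exact (Submodule.le_orthogonal_orthogonal W) huLW
  rw [this] at huLs
  simp at huLs


lemma subgroup_dual {V : Type} [NormedAddCommGroup V] [InnerProductSpace ℝ V]
    [FiniteDimensional ℝ V]
    (D : AddSubgroup V) (hcl : IsClosed (D : Set V)) (hne : (D : Set V) ≠ Set.univ) :
    ∃ y : V, y ≠ 0 ∧ ∀ h ∈ D, ∃ n : ℤ, (inner ℝ y h : ℝ) = n := by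
  classical
  -- the largest linear subspace contained in D
  set W : Submodule ℝ V :=
    { carrier := {v | ∀ t : ℝ, t • v ∈ D}
      add_mem' := fun {a b} ha hb t => by
        have := D.add_mem (ha t) (hb t)
        simpa [smul_add] using this
      zero_mem' := fun t => by simpa using D.zero_mem
      smul_mem' := fun c v hv t => by
        have := hv (t * c)
        simpa [smul_smul] using this } with hW_def
  have hWD : ∀ v ∈ W, v ∈ D := fun v hv => by simpa using hv 1
  have hWmem : ∀ v : V, (∀ t : ℝ, t • v ∈ D) → v ∈ W := fun v hv => hv
  set K : Submodule ℝ V := Wᗮ with hK_def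
  have hKcl : IsClosed (K : Set V) := K.closed_of_finiteDimensional
  -- orthogonal decomposition
  have hdecomp : ∀ x : V, ((orthogonalProjection W x : V) ∈ W) ∧
      ((x - orthogonalProjection W x : V) ∈ K) ∧
      x = (orthogonalProjection W x : V) + (x - orthogonalProjection W x) := by
    intro x
    refine ⟨(orthogonalProjection W x).2, ?_, by abel⟩
    exact Submodule.sub_starProjection_mem_orthogonal x
  have hQD : ∀ h ∈ D, (h - orthogonalProjection W h : V) ∈ D := by
    intro h hh
    exact D.sub_mem hh (hWD _ (orthogonalProjection W h).2)
  -- discreteness of D ∩ K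
  obtain ⟨ε, hε, hdisc⟩ := subgroup_discrete_part D hcl W hWmem
  -- the lattice part
  by_cases hsup : W ⊔ span ℝ {v : V | v ∈ D ∧ v ∈ K} = ⊤
  · -- K is spanned by D ∩ K; use a lattice basis
    have hKne : K ≠ ⊥ := by
      intro hKbot
      apply hne
      have hWtop : W = ⊤ := by
        have := congrArg (fun S : Submodule ℝ V => Sᗮ) hKbot
        simpa [hK_def, Submodule.orthogonal_orthogonal] using this
      ext x
      simp only [Set.mem_univ, iff_true, SetLike.mem_coe]
      exact hWD x (hWtop ▸ Submodule.mem_top)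
    haveI : Nontrivial K := Submodule.nontrivial_iff_ne_bot.mpr hKne
    -- lattice inside K
    set L : Submodule ℤ K :=
      { carrier := {x : K | (x : V) ∈ D}
        add_mem' := fun {a b} ha hb => by
          show ((a + b : K) : V) ∈ D
          rw [Submodule.coe_add]
          exact D.add_mem ha hb
        zero_mem' := by
          show ((0 : K) : V) ∈ D
          rw [Submodule.coe_zero]
          exact D.zero_mem
        smul_mem' := fun n x hx => by
          show ((n • x : K) : V) ∈ D
          rw [Submodule.coe_smul_of_tower]
          exact D.zsmul_mem hx n } with hL_def
    haveI : DiscreteTopology L := by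
      rw [discreteTopology_iff_isOpen_singleton_zero]
      have : ({0} : Set L) = (fun x : L => (x : K)) ⁻¹' (Metric.ball (0 : K) ε) := by
        ext x
        simp only [Set.mem_singleton_iff, Set.mem_preimage, Metric.mem_ball, dist_zero_right]
        constructor
        · rintro rfl; simpa using hε
        · intro hx
          have hx0 : (x : K) = 0 := by
            have h1 : ((x : K) : V) ∈ D := x.2
            have h2 : ((x : K) : V) ∈ K := (x : K).2
            have h3 : ‖((x : K) : V)‖ < ε := hx
            have := hdisc _ h1 h2 h3
            exact Subtype.ext this
          exact Subtype.ext hx0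
      rw [this]
      exact (Metric.isOpen_ball).preimage continuous_subtype_val
    have hLspan : span ℝ (L : Set K) = ⊤ := by
      rw [eq_top_iff]
      rintro x -
      -- x : K; coe x ∈ W ⊔ span ℝ {v | v ∈ D ∧ v ∈ K}
      have hx : (x : V) ∈ W ⊔ span ℝ {v : V | v ∈ D ∧ v ∈ K} := hsup ▸ Submodule.mem_top
      obtain ⟨w, hw, s, hs, hws⟩ := Submodule.mem_sup.mp hx
      have hsK : s ∈ K := by
        have : span ℝ {v : V | v ∈ D ∧ v ∈ K} ≤ K := by
          rw [Submodule.span_le]; exact fun v hv => hv.2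
        exact this hs
      have hwK : w ∈ K := by
        have : w = (x : V) - s := by rw [← hws]; abel
        rw [this]
        exact K.sub_mem x.2 hsK
      have hw0 : w = 0 := by
        have h0 := (Submodule.mem_orthogonal W w).mp hwK w hw
        exact inner_self_eq_zero.mp h0
      have hxs : (x : V) = s := by rw [← hws, hw0, zero_add]
      -- now transfer span membership into K
      have himg : K.subtype '' (L : Set K) = {v : V | v ∈ D ∧ v ∈ K} := by
        ext v
        constructor
        · rintro ⟨x', hx', rfl⟩
          exact ⟨hx', x'.2⟩
        · rintro ⟨hvD, hvK⟩
          exact ⟨⟨v, hvK⟩, hvD, rfl⟩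
      have hmap : Submodule.map K.subtype (span ℝ (L : Set K)) =
          span ℝ {v : V | v ∈ D ∧ v ∈ K} := by
        rw [Submodule.map_span, himg]
      have hx'' : (x : V) ∈ Submodule.map K.subtype (span ℝ (L : Set K)) := by
        rw [hmap, hxs]
        exact hs
      obtain ⟨x', hx', hxx⟩ := Submodule.mem_map.mp hx''
      have hxfin : x' = x := Subtype.ext hxx
      rwa [← hxfin]
    obtain ⟨y', hy'0, hy'⟩ := lattice_dual_vec L hLspan
    refine ⟨(y' : V), by simpa using hy'0, ?_⟩
    intro h hh
    obtain ⟨hPW, hQK, hsum⟩ := hdecomp h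
    have hQD' := hQD h hh
    obtain ⟨n, hn⟩ := hy' ⟨h - orthogonalProjection W h, hQK⟩ hQD'
    refine ⟨n, ?_⟩
    have h1 : (inner ℝ (y' : V) (orthogonalProjection W h : V) : ℝ) = 0 := by
      have := (Submodule.mem_orthogonal W (y' : V)).mp y'.2 _ hPW
      rwa [real_inner_comm] at this
    have h2 : (inner ℝ (y' : V) (h - orthogonalProjection W h : V) : ℝ) = n := by
      rw [← hn]; rfl
    calc (inner ℝ (y' : V) h : ℝ)
        = inner ℝ (y' : V) ((orthogonalProjection W h : V) + (h - orthogonalProjection W h)) := by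
          rw [← hsum]
      _ = (inner ℝ (y' : V) (orthogonalProjection W h : V) : ℝ) +
          inner ℝ (y' : V) (h - orthogonalProjection W h : V) := inner_add_right _ _ _
      _ = (n : ℝ) := by rw [h1, h2, zero_add]
  · -- W ⊔ span (D ∩ K) is a proper subspace; take any nonzero orthogonal vector
    have : (W ⊔ span ℝ {v : V | v ∈ D ∧ v ∈ K})ᗮ ≠ ⊥ := by
      exact fun hbot => hsup (Submodule.orthogonal_eq_bot_iff.mp hbot)
    obtain ⟨y, hy, hy0⟩ := Submodule.exists_mem_ne_zero_of_ne_bot this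
    refine ⟨y, hy0, fun h hh => ⟨0, ?_⟩⟩
    obtain ⟨hPW, hQK, hsum⟩ := hdecomp h
    have h1 : (inner ℝ y (orthogonalProjection W h : V) : ℝ) = 0 := by
      have := (Submodule.mem_orthogonal _ y).mp hy _
        (Submodule.mem_sup_left hPW)
      rwa [real_inner_comm] at this
    have h2 : (inner ℝ y (h - orthogonalProjection W h : V) : ℝ) = 0 := by
      have hmem : (h - orthogonalProjection W h : V) ∈ span ℝ {v : V | v ∈ D ∧ v ∈ K} :=
        Submodule.subset_span ⟨hQD h hh, hQK⟩
      have := (Submodule.mem_orthogonal _ y).mp hy _ (Submodule.mem_sup_right hmem)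
      rwa [real_inner_comm] at this
    calc (inner ℝ y h : ℝ)
        = inner ℝ y ((orthogonalProjection W h : V) + (h - orthogonalProjection W h)) := by
          rw [← hsum]
      _ = (inner ℝ y (orthogonalProjection W h : V) : ℝ) +
          inner ℝ y (h - orthogonalProjection W h : V) := inner_add_right _ _ _
      _ = ((0:ℤ) : ℝ) := by rw [h1, h2, zero_add]; simp



lemma orbit_dense' (d : ℕ) (ω : EuclideanSpace ℝ (Fin d))
    (hres : ∀ k : Fin d → ℤ, k ≠ 0 →
      (inner ℝ ω (WithLp.toLp 2 (fun i => (k i : ℝ)) : EuclideanSpace ℝ (Fin d)) : ℝ) ≠ 0) :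
    Dense {v : EuclideanSpace ℝ (Fin d) | ∃ (t : ℝ) (m : Fin d → ℤ),
      v = t • ω + (show EuclideanSpace ℝ (Fin d) from WithLp.toLp 2 (fun i => (m i : ℝ)))} := by
  classical
  set ivec : (Fin d → ℤ) → EuclideanSpace ℝ (Fin d) := fun m => WithLp.toLp 2 (fun i => (m i : ℝ)) with hivec
  have hivec_add : ∀ m m' : Fin d → ℤ, ivec (m + m') = ivec m + ivec m' := by
    intro m m'
    ext i
    show ((m + m') i : ℝ) = (m i : ℝ) + (m' i : ℝ)
    rw [Pi.add_apply, Int.cast_add]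
  have hivec_neg : ∀ m : Fin d → ℤ, ivec (-m) = -ivec m := by
    intro m
    ext i
    show ((-m) i : ℝ) = -(m i : ℝ)
    rw [Pi.neg_apply, Int.cast_neg]
  have hivec_zero : ivec 0 = 0 := by
    ext i
    show ((0 : ℤ) : ℝ) = 0
    norm_num
  set S : AddSubgroup (EuclideanSpace ℝ (Fin d)) :=
    { carrier := {v | ∃ (t : ℝ) (m : Fin d → ℤ), v = t • ω + ivec m}
      add_mem' := by
        rintro a b ⟨t, m, rfl⟩ ⟨t', m', rfl⟩
        exact ⟨t + t', m + m', by rw [add_smul, hivec_add]; abel⟩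
      zero_mem' := ⟨0, 0, by rw [hivec_zero, zero_smul, add_zero]⟩
      neg_mem' := by
        rintro a ⟨t, m, rfl⟩
        exact ⟨-t, -m, by rw [neg_smul, hivec_neg]; abel⟩ } with hS
  set D := S.topologicalClosure with hD
  have hDcl : IsClosed (D : Set (EuclideanSpace ℝ (Fin d))) := S.isClosed_topologicalClosure
  have hkey : (D : Set (EuclideanSpace ℝ (Fin d))) = Set.univ := by
    by_contra hne
    obtain ⟨y, hy0, hy⟩ := subgroup_dual D hDcl hne
    have hSD : ∀ v ∈ S, v ∈ D := fun v hv => S.le_topologicalClosure hv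
    -- y has integer coordinates
    have hyint : ∀ i : Fin d, ∃ n : ℤ, y i = n := by
      intro i
      have hei : (EuclideanSpace.single i (1:ℝ)) ∈ S := by
        refine ⟨0, Pi.single i 1, ?_⟩
        rw [zero_smul, zero_add]
        ext j
        show EuclideanSpace.single i (1:ℝ) j = ((Pi.single i 1 : Fin d → ℤ) j : ℝ)
        by_cases hj : j = i
        · subst hj; simp
        · simp [hj, Pi.single_apply]
      obtain ⟨n, hn⟩ := hy _ (hSD _ hei)
      refine ⟨n, ?_⟩
      rw [EuclideanSpace.inner_single_right] at hn
      simpa using hn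
    choose k hk using hyint
    have hyk : y = ivec k := by
      ext i
      exact hk i
    have hknz : k ≠ 0 := by
      intro h0
      apply hy0
      rw [hyk, h0, hivec_zero]
    -- inner ℝ y ω = 0
    have hyω : (inner ℝ y ω : ℝ) = 0 := by
      by_contra hc
      obtain ⟨n, hn⟩ := hy ((1 / (2 * (inner ℝ y ω : ℝ))) • ω)
        (hSD _ ⟨_, 0, by rw [hivec_zero, add_zero]⟩)
      rw [real_inner_smul_right] at hn
      have h2 : (1 / (2 * (inner ℝ y ω : ℝ))) * (inner ℝ y ω : ℝ) * 2 = 1 := by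
        rw [div_mul_eq_mul_div, one_mul, div_mul_eq_mul_div, mul_comm (inner ℝ y ω : ℝ) 2]
        exact div_self (mul_ne_zero two_ne_zero hc)
      rw [hn] at h2
      have h3 : ((2 * n : ℤ) : ℝ) = ((1 : ℤ) : ℝ) := by push_cast; linarith
      have := Int.cast_injective h3
      omega
    have hky : WithLp.toLp 2 (fun i => (k i : ℝ)) = y := by ext i; exact (hk i).symm
    exact hres k hknz (by rw [hky, real_inner_comm]; exact hyω)
  rw [dense_iff_closure_eq]
  have hsets : {v : EuclideanSpace ℝ (Fin d) | ∃ (t : ℝ) (m : Fin d → ℤ),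
      v = t • ω + (show EuclideanSpace ℝ (Fin d) from WithLp.toLp 2 (fun i => (m i : ℝ)))}
      = (S : Set (EuclideanSpace ℝ (Fin d))) := rfl
  rw [hsets]
  rw [hD, AddSubgroup.topologicalClosure_coe] at hkey
  exact hkey



theorem commuting_implies_constant_on_fibers (d : ℕ) (hd : 1 ≤ d)
    (F : EuclideanSpace ℝ (Fin d) → ℝ) (hF : ContDiff ℝ 1 F)
    (B : Set (EuclideanSpace ℝ (Fin d))) (hB : IsOpen B)
    (hruss : ∀ k : Fin d → ℤ, k ≠ 0 →
        interior {ξ ∈ B | fderiv ℝ F ξ (WithLp.toLp 2 (fun i => (k i : ℝ))) = 0} = ∅)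
    (A : EuclideanSpace ℝ (Fin d) × EuclideanSpace ℝ (Fin d) → ℝ)
    (hA : ContDiff ℝ 1 A)
    (hper : ∀ m : Fin d → ℤ, ∀ x ξ : EuclideanSpace ℝ (Fin d),
        A (x + (show EuclideanSpace ℝ (Fin d) from WithLp.toLp 2 (fun i => (m i : ℝ))), ξ) = A (x, ξ))
    (hcomm : ∀ x : EuclideanSpace ℝ (Fin d), ∀ ξ ∈ B,
        fderiv ℝ (fun y => A (y, ξ)) x (gradient F ξ) = 0) :
    ∀ x y : EuclideanSpace ℝ (Fin d), ∀ ξ ∈ B, A (x, ξ) = A (y, ξ) := by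
  classical
  -- Step 1: for nonresonant ξ ∈ B, the fiber is constant
  have main : ∀ ξ ∈ B, (∀ k : Fin d → ℤ, k ≠ 0 →
      fderiv ℝ F ξ (WithLp.toLp 2 (fun i => (k i : ℝ))) ≠ 0) →
      ∀ x y : EuclideanSpace ℝ (Fin d), A (x, ξ) = A (y, ξ) := by
    intro ξ hξ hres x y
    set ω := gradient F ξ with hω
    have hgrad : ∀ v : EuclideanSpace ℝ (Fin d), (inner ℝ ω v : ℝ) = fderiv ℝ F ξ v := by
      intro v
      rw [hω, gradient]
      exact InnerProductSpace.toDual_symm_apply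
    -- the function along the fiber
    set g : EuclideanSpace ℝ (Fin d) → ℝ := fun v => A (v, ξ) with hg
    have hgdiff : Differentiable ℝ g := by
      have h1 : Differentiable ℝ A := hA.differentiable one_ne_zero
      exact h1.comp ((differentiable_id).prodMk (differentiable_const ξ))
    have hgcont : Continuous g := hgdiff.continuous
    -- g is constant along the direction ω
    have hline : ∀ z : EuclideanSpace ℝ (Fin d), ∀ t : ℝ, g (z + t • ω) = g z := by
      intro z t
      have hφd : ∀ s : ℝ, HasDerivAt (fun s : ℝ => g (z + s • ω)) 0 s := by
        intro s
        have hc : HasDerivAt (fun s : ℝ => z + s • ω) ω s := by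
          simpa using ((hasDerivAt_id s).smul_const ω).const_add z
        have hgd : HasFDerivAt g (fderiv ℝ g (z + s • ω)) (z + s • ω) :=
          (hgdiff (z + s • ω)).hasFDerivAt
        have := hgd.comp_hasDerivAt s hc
        have h0 : fderiv ℝ g (z + s • ω) ω = 0 := hcomm (z + s • ω) ξ hξ
        rwa [h0] at this
      have hconst := is_const_of_deriv_eq_zero (𝕜 := ℝ) (f := fun s : ℝ => g (z + s • ω))
        (fun s => (hφd s).differentiableAt) (fun s => (hφd s).deriv) t 0
      simpa using hconst
    -- g is periodic
    have hperiod : ∀ z : EuclideanSpace ℝ (Fin d), ∀ m : Fin d → ℤ,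
        g (z + (show EuclideanSpace ℝ (Fin d) from WithLp.toLp 2 (fun i => (m i : ℝ)))) = g z := by
      intro z m
      exact hper m z ξ
    -- g is constant on the dense orbit
    have horbit : ∀ v ∈ {v : EuclideanSpace ℝ (Fin d) | ∃ (t : ℝ) (m : Fin d → ℤ),
        v = t • ω + (show EuclideanSpace ℝ (Fin d) from WithLp.toLp 2 (fun i => (m i : ℝ)))},
        g (x + v) = g x := by
      rintro v ⟨t, m, rfl⟩
      have : x + (t • ω + (show EuclideanSpace ℝ (Fin d) from WithLp.toLp 2 (fun i => (m i : ℝ))))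
          = (x + t • ω) + (show EuclideanSpace ℝ (Fin d) from WithLp.toLp 2 (fun i => (m i : ℝ))) := by abel
      rw [this, hperiod (x + t • ω) m, hline x t]
    -- density
    have hdense : Dense {v : EuclideanSpace ℝ (Fin d) | ∃ (t : ℝ) (m : Fin d → ℤ),
        v = t • ω + (show EuclideanSpace ℝ (Fin d) from WithLp.toLp 2 (fun i => (m i : ℝ)))} := by
      apply orbit_dense' d ω
      intro k hk
      rw [hgrad]
      exact hres k hk
    -- conclude
    have hfun : (fun v => g (x + v)) = (fun _ => g x) := by
      apply Continuous.ext_on hdense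
      · exact hgcont.comp (continuous_const.add continuous_id)
      · exact continuous_const
      · exact horbit
    have := congrFun hfun (y - x)
    simp only [add_sub_cancel] at this
    exact this.symm
  -- Step 2: Baire category, the nonresonant set is dense in B
  intro x y ξ hξ
  set M : Set (EuclideanSpace ℝ (Fin d)) := ⋃ k : {k : Fin d → ℤ // k ≠ 0},
    (B ∩ {ξ' | fderiv ℝ F ξ' (WithLp.toLp 2 (fun i => ((k : Fin d → ℤ) i : ℝ))) = 0}) with hM
  have hcont : Continuous fun ξ' => fderiv ℝ F ξ' := hF.continuous_fderiv one_ne_zero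
  have hCclosed : ∀ k : Fin d → ℤ,
      IsClosed {ξ' : EuclideanSpace ℝ (Fin d) | fderiv ℝ F ξ' (WithLp.toLp 2 (fun i => (k i : ℝ))) = 0} := by
    intro k
    have : Continuous fun ξ' => fderiv ℝ F ξ' (WithLp.toLp 2 (fun i => (k i : ℝ))) := by
      exact (ContinuousLinearMap.apply ℝ ℝ (WithLp.toLp 2 (fun i => (k i : ℝ)) :
        EuclideanSpace ℝ (Fin d))).continuous.comp hcont
    exact isClosed_eq this continuous_const
  have hND : ∀ k : Fin d → ℤ, k ≠ 0 → IsNowhereDense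
      (B ∩ {ξ' | fderiv ℝ F ξ' (WithLp.toLp 2 (fun i => (k i : ℝ))) = 0}) := by
    intro k hk
    rw [IsNowhereDense]
    by_contra hne
    obtain ⟨z, hz⟩ := Set.nonempty_iff_ne_empty.mpr hne
    set C := {ξ' : EuclideanSpace ℝ (Fin d) | fderiv ℝ F ξ' (WithLp.toLp 2 (fun i => (k i : ℝ))) = 0} with hC
    have hsubC : closure (B ∩ C) ⊆ C := closure_minimal inter_subset_right (hCclosed k)
    have hsubB : closure (B ∩ C) ⊆ closure B := closure_mono inter_subset_left
    have hUopen : IsOpen (interior (closure (B ∩ C))) := isOpen_interior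
    have hzB : z ∈ closure B := hsubB (interior_subset hz)
    -- interior (closure (B ∩ C)) ∩ B is nonempty and open
    obtain ⟨w, hw1, hw2⟩ : (interior (closure (B ∩ C)) ∩ B).Nonempty := by
      have := mem_closure_iff.mp hzB _ hUopen hz
      exact this
    have hwopen : IsOpen (interior (closure (B ∩ C)) ∩ B) := hUopen.inter hB
    have hwsub : interior (closure (B ∩ C)) ∩ B ⊆ B ∩ C := by
      rintro w' ⟨hw'1, hw'2⟩
      exact ⟨hw'2, hsubC (interior_subset hw'1)⟩
    have : w ∈ interior {ξ' ∈ B | fderiv ℝ F ξ' (WithLp.toLp 2 (fun i => (k i : ℝ))) = 0} := by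
      have hBC : {ξ' ∈ B | fderiv ℝ F ξ' (WithLp.toLp 2 (fun i => (k i : ℝ))) = 0} = B ∩ C := rfl
      rw [hBC]
      exact (interior_maximal hwsub hwopen) ⟨hw1, hw2⟩
    rw [hruss k hk] at this
    exact this
  have hMmeagre : IsMeagre M := by
    rw [hM]
    rw [IsMeagre, compl_iUnion]
    rw [countable_iInter_mem]
    intro k
    have h1 := hND k.1 k.2
    obtain ⟨t, hsub, htND, htcl⟩ := h1.subset_of_closed_isNowhereDense
    have hcd := isClosed_isNowhereDense_iff_compl.mp ⟨htcl, htND⟩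
    exact Filter.mem_of_superset (residual_of_dense_open hcd.1 hcd.2)
      (compl_subset_compl.mpr hsub)
  have hMcdense : Dense Mᶜ := dense_of_mem_residual hMmeagre
  -- ξ is in the closure of the good set
  have hclos : B ⊆ closure (B ∩ Mᶜ) := hMcdense.open_subset_closure_inter hB
  have hgood : B ∩ Mᶜ ⊆ {ξ' | A (x, ξ') = A (y, ξ')} := by
    rintro ξ' ⟨hξ'B, hξ'M⟩
    apply main ξ' hξ'B
    intro k hk hzero
    apply hξ'M
    rw [hM]
    exact Set.mem_iUnion.mpr ⟨⟨k, hk⟩, hξ'B, hzero⟩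
  have hclosed : IsClosed {ξ' : EuclideanSpace ℝ (Fin d) | A (x, ξ') = A (y, ξ')} := by
    have hAc : Continuous A := hA.continuous
    exact isClosed_eq (hAc.comp (continuous_const.prodMk continuous_id))
      (hAc.comp (continuous_const.prodMk continuous_id))
  have : ξ ∈ closure {ξ' : EuclideanSpace ℝ (Fin d) | A (x, ξ') = A (y, ξ')} :=
    closure_mono hgood (hclos hξ)
  rw [hclosed.closure_eq] at this
  exact this
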